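/- Properties (S1) and (S4) are mutually exclusive: if the 1×n pattern vector A₁ is independent of col(A₂, C) (where A₂ is an (n-1)×n pattern matrix of full row rank and C is a 1×n pattern vector), then C is not independent of A₂. -/
import Mathlib


inductive PSym | zero | star | any
deriving DecidableEq

namespace PSym

def symAdd : PSym → PSym → PSym
  | zero, x => x
  | x, zero => x
  | _, _ => any

def symMul : PSym → PSym → PSym
  | zero, _ => zero
  | _, zero => zero
  | star, star => star
  | _, _ => any

instance : Zero PSym := ⟨zero⟩
instance : Add PSym := ⟨symAdd⟩

instance : AddCommMonoid PSym where
  add_assoc a b c := by cases a <;> cases b <;> cases c <;> rfl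
  zero_add a := by cases a <;> rfl
  add_zero a := by cases a <;> rfl
  add_comm a b := by cases a <;> cases b <;> rfl
  nsmul := nsmulRec

end PSym

/-- The pattern class of a pattern matrix. -/
def PatClass {p q : Type*} (M : Matrix p q PSym) : Set (Matrix p q ℝ) :=
  {A | ∀ i j, (M i j = PSym.zero → A i j = 0) ∧ (M i j = PSym.star → A i j ≠ 0)}

/-- Product of pattern matrices. -/
def patMul {p q s : ℕ} (M : Matrix (Fin p) (Fin q) PSym) (N : Matrix (Fin q) (Fin s) PSym) :
    Matrix (Fin p) (Fin s) PSym :=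
  fun i j => ∑ k, PSym.symMul (M i k) (N k j)

/-- A 1×q pattern vector `M` is independent of an r×q pattern matrix `N`. -/
def Independent {q r : ℕ} (M : Matrix (Fin 1) (Fin q) PSym) (N : Matrix (Fin r) (Fin q) PSym) : Prop :=
  ∀ M₀ ∈ PatClass M, ∀ N₀ ∈ PatClass N, ∀ (z₁ : ℝ) (z₂ : Fin r → ℝ),
    (∀ j, z₁ * M₀ 0 j + ∑ i, z₂ i * N₀ i j = 0) → z₁ = 0

/-- Canonical instance of a pattern matrix. -/
def patInst {p q : Type*} (M : Matrix p q PSym) : Matrix p q ℝ :=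
  fun i j => if M i j = PSym.star then 1 else 0

theorem patInst_mem {p q : Type*} (M : Matrix p q PSym) : patInst M ∈ PatClass M := by
  intro i j
  constructor
  · intro h; simp [patInst, h]
  · intro h; simp [patInst, h]

/-- (S1) and (S4) are mutually exclusive: if `A₁` is independent
of `col(A₂, C)` with `A₂` of full row rank, then `C` is not independent of
`A₂`. -/
theorem S1_excludes_S4 {n : ℕ}
    (A₁ : Matrix (Fin 1) (Fin (n + 1)) PSym) (A₂ : Matrix (Fin n) (Fin (n + 1)) PSym)
    (C : Matrix (Fin 1) (Fin (n + 1)) PSym)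
    (hA₂ : ∀ A₂₀ ∈ PatClass A₂, LinearIndependent ℝ (fun i : Fin n => A₂₀ i))
    (hInd : Independent A₁
      (Matrix.of (Fin.snoc (fun i => A₂ i) (C 0)) : Matrix (Fin (n + 1)) (Fin (n + 1)) PSym)) :
    ¬ Independent C A₂ := by
  intro hC
  rw [Independent] at hC hInd
  set Npat : Matrix (Fin (n + 1)) (Fin (n + 1)) PSym :=
    (Matrix.of (Fin.snoc (fun i => A₂ i) (C 0))) with hNpat
  set N₀ : Matrix (Fin (n + 1)) (Fin (n + 1)) ℝ := patInst Npat with hN₀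
  have hNmem : N₀ ∈ PatClass Npat := patInst_mem _
  -- instances of A₂ and C extracted from N₀
  set A₂₀ : Matrix (Fin n) (Fin (n + 1)) ℝ := fun i j => N₀ (Fin.castSucc i) j with hA₂₀def
  set C₀ : Matrix (Fin 1) (Fin (n + 1)) ℝ := fun _ j => N₀ (Fin.last n) j with hC₀def
  have hA₂entry : ∀ i j, Npat (Fin.castSucc i) j = A₂ i j := by
    intro i j
    simp [hNpat, Fin.snoc_castSucc]
  have hCentry : ∀ j, Npat (Fin.last n) j = C 0 j := by
    intro j
    simp [hNpat, Fin.snoc_last]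
  have hA₂mem : A₂₀ ∈ PatClass A₂ := by
    intro i j
    have := hNmem (Fin.castSucc i) j
    rw [hA₂entry i j] at this
    exact this
  have hCmem : C₀ ∈ PatClass C := by
    intro i j
    have := hNmem (Fin.last n) j
    rw [hCentry j] at this
    have hi : i = 0 := Subsingleton.elim _ _
    subst hi
    exact this
  -- the rows of N₀ are linearly independent
  have hLI : LinearIndependent ℝ (fun i : Fin (n + 1) => N₀ i) := by
    rw [Fintype.linearIndependent_iff]
    intro g hg
    have hg' : ∀ j, (∑ i, g i • N₀ i) j = 0 := fun j => congrFun hg j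
    have hsplit : ∀ j, g (Fin.last n) * C₀ 0 j + ∑ i : Fin n, g (Fin.castSucc i) * A₂₀ i j = 0 := by
      intro j
      have := hg' j
      rw [Finset.sum_apply] at this
      rw [Fin.sum_univ_castSucc] at this
      simp only [Pi.smul_apply, smul_eq_mul] at this
      linarith [this]
    have hlast : g (Fin.last n) = 0 :=
      hC C₀ hCmem A₂₀ hA₂mem (g (Fin.last n)) (fun i => g (Fin.castSucc i)) hsplit
    have hrest : ∀ i : Fin n, g (Fin.castSucc i) = 0 := by
      have hA₂li := hA₂ A₂₀ hA₂mem
      rw [Fintype.linearIndependent_iff] at hA₂li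
      apply hA₂li
      funext j
      have := hsplit j
      rw [hlast, zero_mul, zero_add] at this
      simpa [Finset.sum_apply] using this
    intro i
    induction i using Fin.lastCases with
    | last => exact hlast
    | cast i => exact hrest i
  -- they form a basis
  have hcard : Fintype.card (Fin (n + 1)) = Module.finrank ℝ (Fin (n + 1) → ℝ) := by
    simp
  let B := basisOfLinearIndependentOfCardEqFinrank hLI hcard
  have hB : ∀ i, B i = N₀ i := fun i =>
    congrFun (coe_basisOfLinearIndependentOfCardEqFinrank hLI hcard) i
  -- take an instance of A₁ and express its row in the basis
  set A₁₀ : Matrix (Fin 1) (Fin (n + 1)) ℝ := patInst A₁ with hA₁₀def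
  have hA₁mem : A₁₀ ∈ PatClass A₁ := patInst_mem _
  set c : Fin (n + 1) → ℝ := fun i => B.repr (A₁₀ 0) i with hc
  have hrepr : ∑ i, c i • B i = A₁₀ 0 := B.sum_repr (A₁₀ 0)
  have hrel : ∀ j, (1 : ℝ) * A₁₀ 0 j + ∑ i, (-(c i)) * N₀ i j = 0 := by
    intro j
    have h1 := congrFun hrepr j
    rw [Finset.sum_apply] at h1
    simp only [Pi.smul_apply, smul_eq_mul] at h1
    have h2 : ∑ i, c i * N₀ i j = A₁₀ 0 j := by
      rw [← h1]
      exact Finset.sum_congr rfl fun i _ => by rw [hB]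
    have h3 : ∑ i, (-(c i)) * N₀ i j = -∑ i, c i * N₀ i j := by
      rw [← Finset.sum_neg_distrib]
      exact Finset.sum_congr rfl fun i _ => by ring
    rw [h3, h2]
    ring
  have := hInd A₁₀ hA₁mem N₀ hNmem 1 (fun i => -(c i)) hrel
  exact one_ne_zero this
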